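/- In the commutative polynomial ring $\mathbb{C}[y_1,y_2,\xi_1,\xi_2]$, the ideal $J$ generated by $y_2^2\xi_1^3\xi_2^2 + 3y_2^2\xi_1^2\xi_2^3 + 3y_2^2\xi_1\xi_2^4 + y_2^2\xi_2^5$, $y_1 y_2\xi_1^3 + 3y_1 y_2\xi_1^2\xi_2 + 3y_2^2\xi_1\xi_2^2 + y_2^2\xi_2^3$, $y_1^2\xi_1^2 - y_1 y_2\xi_1^2$, and $y_1 y_2\xi_2^2 - y_2^2\xi_2^2$ has zero set of dimension exactly 2 in $\mathbb{C}^4$. -/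

import Mathlib

set_option synthInstance.maxHeartbeats 1000000
set_option maxHeartbeats 1000000

open MvPolynomial Ideal

noncomputable section Stmt18Aux

namespace Stmt18Aux

lemma noChain3 {A : Type*} [CommRing A] (hdom : IsDomain A) (hpid : IsPrincipalIdealRing A)
    {a b c : Ideal A} (hb : b.IsPrime) (hc : c.IsPrime)
    (h1 : a < b) (h2 : b < c) : False := by
  haveI := hdom; haveI := hpid
  have hbb : b ≠ ⊥ := by rintro rfl; exact not_lt_bot h1
  haveI := hb
  have hm := _root_.IsPrime.to_maximal_ideal (hpi := hb) hbb
  exact h2.ne (hm.eq_of_le hc.ne_top h2.le)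

lemma pushLt {A B : Type*} [CommRing A] [CommRing B] (f : A →+* B) (hf : Function.Surjective f)
    {a b : Ideal A} (hk : RingHom.ker f ≤ a) (h : a < b) :
    Ideal.map f a < Ideal.map f b := by
  have hca : Ideal.comap f (Ideal.map f a) = a := by
    rw [Ideal.comap_map_of_surjective f hf a, ← RingHom.ker_eq_comap_bot]
    exact sup_eq_left.mpr hk
  have hcb : Ideal.comap f (Ideal.map f b) = b := by
    rw [Ideal.comap_map_of_surjective f hf b, ← RingHom.ker_eq_comap_bot]
    exact sup_eq_left.mpr (le_trans hk h.le)
  refine lt_of_le_of_ne (Ideal.map_mono h.le) fun e => h.ne ?_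
  rw [← hca, ← hcb, e]

lemma noChain3E {A B : Type*} [CommRing A] [CommRing B] (hdom : IsDomain B)
    (hpid : IsPrincipalIdealRing B) (e : A ≃+* B) {a b c : Ideal A} (ha : a.IsPrime) (hb : b.IsPrime) (hc : c.IsPrime)
    (h1 : a < b) (h2 : b < c) : False := by
  have hk : ∀ q : Ideal A, RingHom.ker (e : A →+* B) ≤ q := fun q => by
    rw [RingHom.ker_coe_equiv]; exact bot_le
  haveI := ha; haveI := hb; haveI := hc
  have Pb := Ideal.map_isPrime_of_surjective (f := (e : A →+* B)) e.surjective (hk b)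
  have Pc := Ideal.map_isPrime_of_surjective (f := (e : A →+* B)) e.surjective (hk c)
  exact noChain3 hdom hpid Pb Pc (pushLt _ e.surjective (hk a) h1) (pushLt _ e.surjective (hk b) h2)

/-! ## The two-variable ring -/

abbrev Rb : Type := Polynomial ℂ
abbrev Tb : Type := MvPolynomial (Fin 1) Rb
abbrev Kb : Type := FractionRing Rb

/-- `MvPolynomial (Fin 1) k ≃+* Polynomial k` -/
def e1 (k : Type*) [CommRing k] : MvPolynomial (Fin 1) k ≃+* Polynomial k :=
  ((renameEquiv k (Equiv.equivPUnit.{1,1} (Fin 1))).trans (pUnitAlgEquiv k)).toRingEquiv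

/-- the contraction map -/
abbrev CC : Rb →+* Tb := MvPolynomial.C

/-- the quotient ring hom for a prime `c` of the base -/
def E (c : Ideal Rb) : (Tb ⧸ Ideal.map CC c) ≃+* Polynomial (Rb ⧸ c) :=
  ((MvPolynomial.quotientEquivQuotientMvPolynomial (σ := Fin 1) c).symm.toRingEquiv).trans
    (e1 (Rb ⧸ c))

def qHom (c : Ideal Rb) : Tb →+* Polynomial (Rb ⧸ c) :=
  (E c).toRingHom.comp (Ideal.Quotient.mk (Ideal.map CC c))

lemma qHom_surj (c : Ideal Rb) : Function.Surjective (qHom c) :=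
  (E c).surjective.comp Ideal.Quotient.mk_surjective

lemma ker_qHom_le (c : Ideal Rb) : RingHom.ker (qHom c) ≤ Ideal.map CC c := by
  intro x hx
  have hx0 : (E c) (Ideal.Quotient.mk (Ideal.map CC c) x) = 0 := hx
  have : Ideal.Quotient.mk (Ideal.map CC c) x = 0 := by
    apply (E c).injective
    simpa using hx0
  exact (Ideal.Quotient.eq_zero_iff_mem).mp this

/-- three primes of `Tb` lying over a maximal ideal of the base: impossible -/
lemma noTripleQuot {c : Ideal Rb} (hc : c.IsMaximal) {qa qb qc : Ideal Tb}
    (pa : qa.IsPrime) (pb : qb.IsPrime) (pc : qc.IsPrime)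
    (hma : Ideal.map CC c ≤ qa) (h1 : qa < qb) (h2 : qb < qc) : False := by
  haveI := hc
  have hdom : IsDomain (Polynomial (Rb ⧸ c)) := inferInstance
  have hpid : IsPrincipalIdealRing (Polynomial (Rb ⧸ c)) := by
    letI : Field (Rb ⧸ c) := Ideal.Quotient.field c
    exact EuclideanDomain.to_principal_ideal_domain
  have hk : RingHom.ker (qHom c) ≤ qa := le_trans (ker_qHom_le c) hma
  haveI := pa; haveI := pb; haveI := pc
  have Pb := Ideal.map_isPrime_of_surjective (f := qHom c) (qHom_surj c) (hk.trans h1.le)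
  have Pc := Ideal.map_isPrime_of_surjective (f := qHom c) (qHom_surj c)
    ((hk.trans h1.le).trans h2.le)
  exact noChain3 hdom hpid Pb Pc (pushLt (B := Polynomial (Rb ⧸ c)) _ (qHom_surj c) (by convert hk using 0) h1)
    (pushLt (B := Polynomial (Rb ⧸ c)) _ (qHom_surj c) (by convert hk.trans h1.le using 0) h2)

attribute [local instance] MvPolynomial.algebraMvPolynomial

/-- three primes of `Tb` all contracting to `⊥`: impossible -/
lemma noTripleBot {qa qb qc : Ideal Tb}
    (pa : qa.IsPrime) (pb : qb.IsPrime) (pc : qc.IsPrime)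
    (ha : Ideal.comap CC qa = ⊥) (hb : Ideal.comap CC qb = ⊥) (hc : Ideal.comap CC qc = ⊥)
    (h1 : qa < qb) (h2 : qb < qc) : False := by
  have hdom : IsDomain (Polynomial Kb) := inferInstance
  have hpid : IsPrincipalIdealRing (Polynomial Kb) := @EuclideanDomain.to_principal_ideal_domain (Polynomial Kb) _
  set M : Submonoid Tb := (nonZeroDivisors Rb).map CC with hM
  have disj : ∀ q : Ideal Tb, Ideal.comap CC q = ⊥ → Disjoint (M : Set Tb) (q : Set Tb) := by
    intro q hq
    rw [Set.disjoint_left]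
    rintro x ⟨r, hr, rfl⟩ hxq
    have : r ∈ Ideal.comap CC q := hxq
    rw [hq] at this
    rw [Ideal.mem_bot] at this
    subst this
    exact zero_notMem_nonZeroDivisors hr
  haveI : IsLocalization M (MvPolynomial (Fin 1) Kb) :=
    MvPolynomial.isLocalization (nonZeroDivisors Rb) Kb
  let e := IsLocalization.orderIsoOfPrime M (MvPolynomial (Fin 1) Kb)
  let a' := e.symm ⟨qa, pa, disj _ ha⟩
  let b' := e.symm ⟨qb, pb, disj _ hb⟩
  let c' := e.symm ⟨qc, pc, disj _ hc⟩
  have l1 : a' < b' := e.symm.lt_iff_lt.mpr (Subtype.mk_lt_mk.mpr h1)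
  have l2 : b' < c' := e.symm.lt_iff_lt.mpr (Subtype.mk_lt_mk.mpr h2)
  exact noChain3E hdom hpid (e1 Kb) a'.2 b'.2 c'.2 (Subtype.coe_lt_coe.mpr l1) (Subtype.coe_lt_coe.mpr l2)

/-- the 2+2 pattern: `q1 < q2 < q3`, `q1` nonzero contracting to `⊥`,
`q2, q3` contracting to a maximal ideal `c'`. -/
lemma noPat22 {q1 q2 q3 : Ideal Tb}
    (p1 : q1.IsPrime) (p2 : q2.IsPrime) (p3 : q3.IsPrime)
    (h12 : q1 < q2) (h23 : q2 < q3) (hq1 : q1 ≠ ⊥)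
    (hc1 : Ideal.comap CC q1 = ⊥) (hc2m : (Ideal.comap CC q2).IsMaximal)
    (hc2b : Ideal.comap CC q2 ≠ ⊥) : False := by
  set c' : Ideal Rb := Ideal.comap CC q2 with hc'
  obtain ⟨g, hg⟩ := (IsPrincipalIdealRing.principal c').principal
  have hg0 : g ≠ 0 := by
    rintro rfl
    exact hc2b (by rw [hg]; simp)
  have hCg0 : (MvPolynomial.C g : Tb) ≠ 0 := by simpa using hg0
  have hspan : Ideal.span {(MvPolynomial.C g : Tb)} = Ideal.map CC c' := by
    have hgg : c' = Ideal.span {g} := hg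
    rw [hgg, Ideal.map_span, Set.image_singleton]
  haveI hc2p : c'.IsPrime := hc2m.isPrime
  -- `map CC c'` is prime
  have hdomq : IsDomain (Tb ⧸ Ideal.map CC c') := by
    have : Function.Injective
        ((MvPolynomial.quotientEquivQuotientMvPolynomial (σ := Fin 1) c').symm.toRingEquiv
          : (Tb ⧸ Ideal.map CC c') →+* MvPolynomial (Fin 1) (Rb ⧸ c')) :=
      RingEquiv.injective _
    exact Function.Injective.isDomain _ this
  have hmapp : (Ideal.map CC c').IsPrime := (Ideal.Quotient.isDomain_iff_prime _).mp hdomq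
  have hπ : Prime (MvPolynomial.C g : Tb) := by
    rw [← Ideal.span_singleton_prime hCg0, hspan]; exact hmapp
  -- q1 is not contained in `map CC c'`
  have hnle : ¬ q1 ≤ Ideal.map CC c' := by
    intro hle
    obtain ⟨h, hh1, hh0⟩ := Submodule.exists_mem_ne_zero_of_ne_bot hq1
    obtain ⟨n, b, hnd, hfact⟩ := WfDvdMonoid.max_power_factor' hh0 hπ.not_unit
    have hπq1 : (MvPolynomial.C g : Tb) ∉ q1 := by
      intro hm
      have : g ∈ Ideal.comap CC q1 := hm
      rw [hc1, Ideal.mem_bot] at this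
      exact hg0 this
    rw [hfact] at hh1
    have hbq1 : b ∈ q1 :=
      (p1.mem_or_mem hh1).resolve_left fun hpow => hπq1 (p1.mem_of_pow_mem n hpow)
    have : b ∈ Ideal.span {(MvPolynomial.C g : Tb)} := by rw [hspan]; exact hle hbq1
    exact hnd (Ideal.mem_span_singleton.mp this)
  obtain ⟨h', hh'1, hh'2⟩ := SetLike.not_le_iff_exists.mp hnle
  -- push q2 < q3 into Polynomial (Rb ⧸ c')
  haveI := hc2m
  have hdom : IsDomain (Polynomial (Rb ⧸ c')) := inferInstance
  have hpid : IsPrincipalIdealRing (Polynomial (Rb ⧸ c')) := by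
    letI : Field (Rb ⧸ c') := Ideal.Quotient.field c'
    exact EuclideanDomain.to_principal_ideal_domain
  haveI := p2; haveI := p3
  have hk2 : RingHom.ker (qHom c') ≤ q2 :=
    le_trans (ker_qHom_le c') (Ideal.map_le_iff_le_comap.mpr le_rfl)
  have P2 := Ideal.map_isPrime_of_surjective (f := qHom c') (qHom_surj c') hk2
  have P3 := Ideal.map_isPrime_of_surjective (f := qHom c') (qHom_surj c') (hk2.trans h23.le)
  have hlt := pushLt (B := Polynomial (Rb ⧸ c')) _ (qHom_surj c') (by convert hk2 using 0) h23
  have hb2 : Ideal.map (qHom c') q2 ≠ ⊥ := by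
    intro hbot
    have hmem : qHom c' h' ∈ Ideal.map (qHom c') q2 :=
      Ideal.mem_map_of_mem _ (h12.le hh'1)
    rw [hbot, Ideal.mem_bot] at hmem
    exact hh'2 (ker_qHom_le c' hmem)
  haveI := P2
  have hmax := @_root_.IsPrime.to_maximal_ideal (Polynomial (Rb ⧸ c')) _ hdom hpid _ P2 hb2
  exact hlt.ne (hmax.eq_of_le P3.ne_top hlt.le)

/-- three primes with equal contraction: impossible -/
lemma noTriple {qa qb qc : Ideal Tb}
    (pa : qa.IsPrime) (pb : qb.IsPrime) (pc : qc.IsPrime)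
    (hcc : Ideal.comap CC qc = Ideal.comap CC qa)
    (h1 : qa < qb) (h2 : qb < qc) : False := by
  have hba : Ideal.comap CC qb = Ideal.comap CC qa :=
    le_antisymm (hcc ▸ Ideal.comap_mono h2.le) (Ideal.comap_mono h1.le)
  haveI := pa
  by_cases hb : Ideal.comap CC qa = ⊥
  · exact noTripleBot pa pb pc hb (hba.trans hb) (hcc.trans hb) h1 h2
  · haveI : (Ideal.comap CC qa).IsPrime := Ideal.IsPrime.comap _
    have hm := _root_.IsPrime.to_maximal_ideal (S := Ideal.comap CC qa) hb
    exact noTripleQuot hm pa pb pc (Ideal.map_le_iff_le_comap.mpr le_rfl) h1 h2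

lemma hdomRb : IsDomain Rb := inferInstance
lemma hpidRb : IsPrincipalIdealRing Rb := EuclideanDomain.to_principal_ideal_domain

/-- no chain of four primes in `Tb` -/
lemma no4 {q0 q1 q2 q3 : Ideal Tb}
    (p0 : q0.IsPrime) (p1 : q1.IsPrime) (p2 : q2.IsPrime) (p3 : q3.IsPrime)
    (h01 : q0 < q1) (h12 : q1 < q2) (h23 : q2 < q3) : False := by
  haveI := p0; haveI := p1; haveI := p2; haveI := p3
  have hcp : ∀ (q : Ideal Tb), q.IsPrime → (Ideal.comap CC q).IsPrime := by
    intro q hq; haveI := hq; exact Ideal.IsPrime.comap _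
  have m01 : Ideal.comap CC q0 ≤ Ideal.comap CC q1 := Ideal.comap_mono h01.le
  have m12 : Ideal.comap CC q1 ≤ Ideal.comap CC q2 := Ideal.comap_mono h12.le
  have m23 : Ideal.comap CC q2 ≤ Ideal.comap CC q3 := Ideal.comap_mono h23.le
  by_cases e12 : Ideal.comap CC q1 = Ideal.comap CC q2
  · by_cases e01 : Ideal.comap CC q0 = Ideal.comap CC q1
    · exact noTriple p0 p1 p2 (by rw [← e12, ← e01]) h01 h12
    · by_cases e23 : Ideal.comap CC q2 = Ideal.comap CC q3
      · exact noTriple p1 p2 p3 (by rw [← e23, ← e12]) h12 h23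
      · exact noChain3 hdomRb hpidRb (hcp _ p1) (hcp _ p3)
          (lt_of_le_of_ne m01 e01) (lt_of_lt_of_le (lt_of_le_of_ne (e12 ▸ m23) (e12 ▸ e23)) le_rfl)
  · have l12 : Ideal.comap CC q1 < Ideal.comap CC q2 := lt_of_le_of_ne m12 e12
    by_cases e01 : Ideal.comap CC q0 = Ideal.comap CC q1
    · by_cases e23 : Ideal.comap CC q2 = Ideal.comap CC q3
      · by_cases hbb : Ideal.comap CC q1 = ⊥
        · have hq1 : q1 ≠ ⊥ := by rintro rfl; exact not_lt_bot h01
          have hc2b : Ideal.comap CC q2 ≠ ⊥ := by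
            intro hb2; rw [hb2] at l12; exact not_lt_bot l12
          haveI : (Ideal.comap CC q2).IsPrime := hcp _ p2
          have hc2m := _root_.IsPrime.to_maximal_ideal (S := Ideal.comap CC q2) hc2b
          exact noPat22 p1 p2 p3 h12 h23 hq1 hbb hc2m hc2b
        · haveI : (Ideal.comap CC q1).IsPrime := hcp _ p1
          have hm := _root_.IsPrime.to_maximal_ideal (S := Ideal.comap CC q1) hbb
          exact e12 (hm.eq_of_le (hcp _ p2).ne_top m12)
      · exact noChain3 hdomRb hpidRb (hcp _ p2) (hcp _ p3) l12 (lt_of_le_of_ne m23 e23)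
    · exact noChain3 hdomRb hpidRb (hcp _ p1) (hcp _ p2) (lt_of_le_of_ne m01 e01) l12

/-- no chain of four primes in `MvPolynomial (Fin 2) ℂ` -/
lemma no4S2 {q0 q1 q2 q3 : Ideal (MvPolynomial (Fin 2) ℂ)}
    (p0 : q0.IsPrime) (p1 : q1.IsPrime) (p2 : q2.IsPrime) (p3 : q3.IsPrime)
    (h01 : q0 < q1) (h12 : q1 < q2) (h23 : q2 < q3) : False := by
  haveI := p0; haveI := p1; haveI := p2; haveI := p3
  let e : MvPolynomial (Fin 2) ℂ ≃+* Tb :=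
    ((renameEquiv ℂ (_root_.finSuccEquiv 1)).trans (optionEquivRight ℂ (Fin 1))).toRingEquiv
  let f : MvPolynomial (Fin 2) ℂ →+* Tb := e
  have hs : Function.Surjective f := e.surjective
  have hk : ∀ q : Ideal (MvPolynomial (Fin 2) ℂ), RingHom.ker f ≤ q := fun q => by
    show RingHom.ker (e : _ →+* Tb) ≤ q
    rw [RingHom.ker_coe_equiv]; exact bot_le
  exact no4
    (Ideal.map_isPrime_of_surjective (f := f) hs (hk q0))
    (Ideal.map_isPrime_of_surjective (f := f) hs (hk q1))
    (Ideal.map_isPrime_of_surjective (f := f) hs (hk q2))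
    (Ideal.map_isPrime_of_surjective (f := f) hs (hk q3))
    (pushLt f hs (hk q0) h01)
    (pushLt f hs (hk q1) h12)
    (pushLt f hs (hk q2) h23)

/-! ## The four-variable ring -/

abbrev S2 : Type := MvPolynomial (Fin 2) ℂ
abbrev R4 : Type := MvPolynomial (Fin 4) ℂ

def pp1 : R4 := X 1 ^ 2 * X 2 ^ 3 * X 3 ^ 2 + 3 * X 1 ^ 2 * X 2 ^ 2 * X 3 ^ 3
  + 3 * X 1 ^ 2 * X 2 * X 3 ^ 4 + X 1 ^ 2 * X 3 ^ 5
def pp2 : R4 := X 0 * X 1 * X 2 ^ 3 + 3 * X 0 * X 1 * X 2 ^ 2 * X 3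
  + 3 * X 1 ^ 2 * X 2 * X 3 ^ 2 + X 1 ^ 2 * X 3 ^ 3
def pp3 : R4 := X 0 ^ 2 * X 2 ^ 2 - X 0 * X 1 * X 2 ^ 2
def pp4 : R4 := X 0 * X 1 * X 3 ^ 2 - X 1 ^ 2 * X 3 ^ 2

def Jd : Ideal R4 := Ideal.span {pp1, pp2, pp3, pp4}

/-- every prime containing the ideal contains one of five pairs of linear forms -/
lemma key {Q : Ideal R4} (hQ : Q.IsPrime)
    (h1 : pp1 ∈ Q) (h2 : pp2 ∈ Q) (h3 : pp3 ∈ Q) (h4 : pp4 ∈ Q) :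
    ((X 0 : R4) ∈ Q ∧ (X 1 : R4) ∈ Q) ∨ ((X 2 : R4) ∈ Q ∧ (X 3 : R4) ∈ Q) ∨
      ((X 1 : R4) ∈ Q ∧ (X 2 : R4) ∈ Q) ∨ ((X 0 : R4) ∈ Q ∧ (X 3 : R4) ∈ Q) ∨
      ((X 0 - X 1 : R4) ∈ Q ∧ (X 2 + X 3 : R4) ∈ Q) := by
  rw [show pp3 = (X 0 * X 2 ^ 2) * (X 0 - X 1) by unfold pp3; ring] at h3
  rw [show pp4 = (X 1 * X 3 ^ 2) * (X 0 - X 1) by unfold pp4; ring] at h4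
  rw [show pp1 = (X 1 ^ 2 * X 3 ^ 2) * (X 2 + X 3) ^ 3 by unfold pp1; ring] at h1
  rw [show pp2 = X 1 * (X 0 * X 2 ^ 3 + 3 * X 0 * X 2 ^ 2 * X 3 + 3 * X 1 * X 2 * X 3 ^ 2
      + X 1 * X 3 ^ 3) by unfold pp2; ring] at h2
  by_cases hy2 : (X 1 : R4) ∈ Q
  · rcases hQ.mem_or_mem h3 with h | h
    · rcases hQ.mem_or_mem h with h | h
      · exact Or.inl ⟨h, hy2⟩
      · exact Or.inr (Or.inr (Or.inl ⟨hy2, hQ.mem_of_pow_mem 2 h⟩))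
    · have hx0 : (X 0 : R4) ∈ Q := by
        have hh := Q.add_mem h hy2
        rw [sub_add_cancel] at hh
        exact hh
      exact Or.inl ⟨hx0, hy2⟩
  · have hg : (X 0 : R4) * X 2 ^ 3 + 3 * X 0 * X 2 ^ 2 * X 3 + 3 * X 1 * X 2 * X 3 ^ 2
        + X 1 * X 3 ^ 3 ∈ Q := (hQ.mem_or_mem h2).resolve_left hy2
    have hp1' : (X 3 : R4) ∈ Q ∨ (X 2 + X 3 : R4) ∈ Q := by
      rcases hQ.mem_or_mem h1 with h | h
      · rcases hQ.mem_or_mem h with h | h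
        · exact absurd (hQ.mem_of_pow_mem 2 h) hy2
        · exact Or.inl (hQ.mem_of_pow_mem 2 h)
      · exact Or.inr (hQ.mem_of_pow_mem 3 h)
    have hp4' : (X 3 : R4) ∈ Q ∨ (X 0 - X 1 : R4) ∈ Q := by
      rcases hQ.mem_or_mem h4 with h | h
      · rcases hQ.mem_or_mem h with h | h
        · exact absurd h hy2
        · exact Or.inl (hQ.mem_of_pow_mem 2 h)
      · exact Or.inr h
    by_cases h3q : (X 3 : R4) ∈ Q
    · have hx0 : (X 0 : R4) * X 2 ^ 3 ∈ Q := by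
        have hsub := Q.sub_mem hg
          (Q.mul_mem_left (3 * X 0 * X 2 ^ 2 + 3 * X 1 * X 2 * X 3 + X 1 * X 3 ^ 2) h3q)
        rw [show (X 0 : R4) * X 2 ^ 3 + 3 * X 0 * X 2 ^ 2 * X 3 + 3 * X 1 * X 2 * X 3 ^ 2
            + X 1 * X 3 ^ 3
            - (3 * X 0 * X 2 ^ 2 + 3 * X 1 * X 2 * X 3 + X 1 * X 3 ^ 2) * X 3
            = X 0 * X 2 ^ 3 by ring] at hsub
        exact hsub
      rcases hQ.mem_or_mem hx0 with h | h
      · exact Or.inr (Or.inr (Or.inr (Or.inl ⟨h, h3q⟩)))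
      · exact Or.inr (Or.inl ⟨hQ.mem_of_pow_mem 3 h, h3q⟩)
    · exact Or.inr (Or.inr (Or.inr (Or.inr
        ⟨hp4'.resolve_left h3q, hp1'.resolve_left h3q⟩)))

/-- push a 4-chain above a pair `(a, b)` down to `S2` via a retraction -/
lemma casePush {a b : R4} (v : Fin 4 → S2) (w : Fin 2 → R4)
    (hsec : ∀ i : Fin 2, aeval v (w i) = (X i : S2))
    (hker : ∀ j : Fin 4, aeval w (aeval v (X j : R4)) - X j ∈ Ideal.span {a, b})
    {Q0 Q1 Q2 Q3 : Ideal R4}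
    (P0 : Q0.IsPrime) (P1 : Q1.IsPrime) (P2 : Q2.IsPrime) (P3 : Q3.IsPrime)
    (ha : a ∈ Q0) (hb : b ∈ Q0)
    (h01 : Q0 < Q1) (h12 : Q1 < Q2) (h23 : Q2 < Q3) : False := by
  haveI := P0; haveI := P1; haveI := P2; haveI := P3
  set ρ : R4 →ₐ[ℂ] S2 := aeval v with hρ
  set σA : S2 →ₐ[ℂ] R4 := aeval w with hσ
  have hcomp : ρ.comp σA = AlgHom.id ℂ S2 := by
    apply MvPolynomial.algHom_ext
    intro i
    simpa [hρ, hσ] using hsec i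
  have hs : Function.Surjective (ρ : R4 →+* S2) := fun s => ⟨σA s, by
    have := DFunLike.congr_fun hcomp s
    simpa using this⟩
  have hkk : RingHom.ker (ρ : R4 →+* S2) ≤ Ideal.span {a, b} := by
    have hcomp2 : (Ideal.Quotient.mkₐ ℂ (Ideal.span {a, b})).comp (σA.comp ρ)
        = Ideal.Quotient.mkₐ ℂ (Ideal.span {a, b}) := by
      apply MvPolynomial.algHom_ext
      intro j
      show Ideal.Quotient.mkₐ ℂ (Ideal.span {a, b}) (σA (ρ (X j)))
        = Ideal.Quotient.mkₐ ℂ (Ideal.span {a, b}) (X j)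
      simp only [Ideal.Quotient.mkₐ_eq_mk]
      rw [Ideal.Quotient.eq]
      exact hker j
    intro x hx
    have hx0 : ρ x = 0 := hx
    have hcx := DFunLike.congr_fun hcomp2 x
    simp only [AlgHom.comp_apply, hx0, map_zero, Ideal.Quotient.mkₐ_eq_mk] at hcx
    exact (Ideal.Quotient.eq_zero_iff_mem).mp hcx.symm
  have hk0 : RingHom.ker (ρ : R4 →+* S2) ≤ Q0 := hkk.trans (Ideal.span_le.mpr (by
    rintro x (rfl | hx)
    · exact ha
    · rw [Set.mem_singleton_iff] at hx; subst hx; exact hb))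
  exact no4S2
    (Ideal.map_isPrime_of_surjective (f := (ρ : R4 →+* S2)) hs hk0)
    (Ideal.map_isPrime_of_surjective (f := (ρ : R4 →+* S2)) hs (hk0.trans h01.le))
    (Ideal.map_isPrime_of_surjective (f := (ρ : R4 →+* S2)) hs
      ((hk0.trans h01.le).trans h12.le))
    (Ideal.map_isPrime_of_surjective (f := (ρ : R4 →+* S2)) hs
      (((hk0.trans h01.le).trans h12.le).trans h23.le))
    (pushLt _ hs hk0 h01)
    (pushLt _ hs (hk0.trans h01.le) h12)
    (pushLt _ hs ((hk0.trans h01.le).trans h12.le) h23)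

/-- no chain of four primes above `Jd` in `R4` -/
lemma no4R4 {Q0 Q1 Q2 Q3 : Ideal R4}
    (P0 : Q0.IsPrime) (P1 : Q1.IsPrime) (P2 : Q2.IsPrime) (P3 : Q3.IsPrime)
    (hJ : Jd ≤ Q0)
    (h01 : Q0 < Q1) (h12 : Q1 < Q2) (h23 : Q2 < Q3) : False := by
  have hmem : ∀ x ∈ ({pp1, pp2, pp3, pp4} : Set R4), x ∈ Q0 := fun x hx =>
    hJ (Ideal.subset_span hx)
  have h1 := hmem pp1 (by simp)
  have h2 := hmem pp2 (by simp)
  have h3 := hmem pp3 (by simp)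
  have h4 := hmem pp4 (by simp)
  rcases key P0 h1 h2 h3 h4 with ⟨ha, hb⟩ | ⟨ha, hb⟩ | ⟨ha, hb⟩ | ⟨ha, hb⟩ | ⟨ha, hb⟩
  · refine casePush (a := (X 0 : R4)) (b := (X 1 : R4))
      ![0, 0, X 0, X 1] ![X 2, X 3] ?_ ?_ P0 P1 P2 P3 ha hb h01 h12 h23
    · intro i; fin_cases i <;> simp
    · intro j
      fin_cases j <;> simp <;>
        first
          | exact neg_mem (Ideal.subset_span (by simp))
          | exact Ideal.subset_span (by simp)
          | exact Ideal.zero_mem _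
  · refine casePush (a := (X 2 : R4)) (b := (X 3 : R4))
      ![X 0, X 1, 0, 0] ![X 0, X 1] ?_ ?_ P0 P1 P2 P3 ha hb h01 h12 h23
    · intro i; fin_cases i <;> simp
    · intro j
      fin_cases j <;> simp <;>
        first
          | exact neg_mem (Ideal.subset_span (by simp))
          | exact Ideal.subset_span (by simp)
          | exact Ideal.zero_mem _
  · refine casePush (a := (X 1 : R4)) (b := (X 2 : R4))
      ![X 0, 0, 0, X 1] ![X 0, X 3] ?_ ?_ P0 P1 P2 P3 ha hb h01 h12 h23
    · intro i; fin_cases i <;> simp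
    · intro j
      fin_cases j <;> simp <;>
        first
          | exact neg_mem (Ideal.subset_span (by simp))
          | exact Ideal.subset_span (by simp)
          | exact Ideal.zero_mem _
  · refine casePush (a := (X 0 : R4)) (b := (X 3 : R4))
      ![0, X 0, X 1, 0] ![X 1, X 2] ?_ ?_ P0 P1 P2 P3 ha hb h01 h12 h23
    · intro i; fin_cases i <;> simp
    · intro j
      fin_cases j <;> simp <;>
        first
          | exact neg_mem (Ideal.subset_span (by simp))
          | exact Ideal.subset_span (by simp)
          | exact Ideal.zero_mem _
  · refine casePush (a := (X 0 - X 1 : R4)) (b := (X 2 + X 3 : R4))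
      ![X 0, X 0, X 1, -X 1] ![X 0, X 2] ?_ ?_ P0 P1 P2 P3 ha hb h01 h12 h23
    · intro i; fin_cases i <;> simp
    · intro j
      fin_cases j <;> simp <;>
        first
          | { rw [show (-X 2 - X 3 : R4) = -(X 2 + X 3) by ring]
              exact neg_mem (Ideal.subset_span (by simp)) }
          | exact Ideal.subset_span (by simp)
          | exact Ideal.zero_mem _

/-! ## dimension bounds -/

/-- the surjection `R4 → S2` killing the first two variables -/
def phi : R4 →ₐ[ℂ] S2 := aeval ![0, 0, X 0, X 1]

lemma phi_surj : Function.Surjective (phi : R4 →+* S2) := by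
  have hcomp : phi.comp (aeval ![X 2, X 3] : S2 →ₐ[ℂ] R4) = AlgHom.id ℂ S2 := by
    apply MvPolynomial.algHom_ext
    intro i
    fin_cases i <;> simp [phi]
  intro s
  refine ⟨(aeval ![X 2, X 3] : S2 →ₐ[ℂ] R4) s, ?_⟩
  have := DFunLike.congr_fun hcomp s
  simpa using this

lemma Jd_le_ker : Jd ≤ RingHom.ker (phi : R4 →+* S2) := by
  rw [Jd, Ideal.span_le]
  rintro x (rfl | rfl | rfl | hx)
  · show phi pp1 = 0
    unfold pp1 phi
    simp
  · show phi pp2 = 0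
    unfold pp2 phi
    simp
  · show phi pp3 = 0
    unfold pp3 phi
    simp
  · rw [Set.mem_singleton_iff] at hx
    subst hx
    show phi pp4 = 0
    unfold pp4 phi
    simp

def liftPhi : (R4 ⧸ Jd) →+* S2 :=
  Ideal.Quotient.lift Jd (phi : R4 →+* S2) (fun a ha => RingHom.mem_ker.mp (Jd_le_ker ha))

lemma liftPhi_surj : Function.Surjective liftPhi := by
  intro s
  obtain ⟨x, hx⟩ := phi_surj s
  exact ⟨Ideal.Quotient.mk Jd x, by rw [liftPhi, Ideal.Quotient.lift_mk]; exact hx⟩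

/-- a chain of length 2 in `Spec S2` -/
lemma two_le_S2 : (2 : WithBot (WithTop ℕ)) ≤ ringKrullDim S2 := by
  let ψ1 : S2 →ₐ[ℂ] Polynomial ℂ := aeval ![0, Polynomial.X]
  let ψ0 : S2 →ₐ[ℂ] ℂ := aeval ![0, 0]
  let B1 : Ideal S2 := RingHom.ker (ψ1 : S2 →+* Polynomial ℂ)
  let B2 : Ideal S2 := RingHom.ker (ψ0 : S2 →+* ℂ)
  have hB1p : B1.IsPrime := RingHom.ker_isPrime _
  have hB2p : B2.IsPrime := RingHom.ker_isPrime _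
  have hB01 : (⊥ : Ideal S2) < B1 := by
    rw [bot_lt_iff_ne_bot]
    refine Submodule.ne_bot_iff B1 |>.mpr ⟨X 0, ?_, X_ne_zero 0⟩
    show ψ1 (X 0) = 0
    simp [ψ1]
  have hcomp : (Polynomial.aeval (0 : ℂ)).comp ψ1 = ψ0 := by
    apply MvPolynomial.algHom_ext
    intro i
    fin_cases i <;> simp [ψ1, ψ0]
  have hB12 : B1 < B2 := by
    rw [SetLike.lt_iff_le_and_exists]
    constructor
    · intro x hx
      have hx1 : ψ1 x = 0 := hx
      show ψ0 x = 0
      rw [← hcomp]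
      simp [hx1]
    · refine ⟨X 1, ?_, ?_⟩
      · show ψ0 (X 1) = 0
        simp [ψ0]
      · show ¬ ψ1 (X 1) = 0
        simp [ψ1]
  let s0 : PrimeSpectrum S2 := ⟨⊥, Ideal.bot_prime⟩
  let s1 : PrimeSpectrum S2 := ⟨B1, hB1p⟩
  let s2 : PrimeSpectrum S2 := ⟨B2, hB2p⟩
  have st0 : s0 < s1 := (PrimeSpectrum.asIdeal_lt_asIdeal _ _).mp hB01
  have st1 : s1 < s2 := (PrimeSpectrum.asIdeal_lt_asIdeal _ _).mp hB12
  let chain : LTSeries (PrimeSpectrum S2) := ⟨2, ![s0, s1, s2], by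
    intro i
    fin_cases i
    · simpa using st0
    · simpa using st1⟩
  have := Order.LTSeries.length_le_krullDim chain
  exact_mod_cast this

/-- the length bound in the quotient -/
lemma lengthBound (l : LTSeries (PrimeSpectrum (R4 ⧸ Jd))) : l.length ≤ 2 := by
  by_contra hl
  push_neg at hl
  have h3 : 3 ≤ l.length := hl
  let idx : ℕ → Fin (l.length + 1) := fun k => ⟨min k 3, by omega⟩
  have mono : ∀ (m n : ℕ), m < n → n ≤ 3 → l (idx m) < l (idx n) := by
    intro m n hmn hn3
    apply l.strictMono
    show (⟨min m 3, _⟩ : Fin (l.length + 1)) < ⟨min n 3, _⟩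
    rw [Fin.mk_lt_mk]
    omega
  have hcomap : ∀ {x y : PrimeSpectrum (R4 ⧸ Jd)}, x < y →
      Ideal.comap (Ideal.Quotient.mk Jd) x.asIdeal
        < Ideal.comap (Ideal.Quotient.mk Jd) y.asIdeal := by
    intro x y hxy
    have hle : Ideal.comap (Ideal.Quotient.mk Jd) x.asIdeal
        ≤ Ideal.comap (Ideal.Quotient.mk Jd) y.asIdeal :=
      Ideal.comap_mono ((PrimeSpectrum.asIdeal_le_asIdeal _ _).mpr hxy.le)
    refine lt_of_le_of_ne hle fun he => hxy.ne ?_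
    have := Ideal.comap_injective_of_surjective (R := R4) (S := R4 ⧸ Jd)
      (F := R4 →+* (R4 ⧸ Jd)) (Ideal.Quotient.mk Jd) Ideal.Quotient.mk_surjective he
    exact PrimeSpectrum.ext_iff.mpr this
  have hprime : ∀ x : PrimeSpectrum (R4 ⧸ Jd),
      (Ideal.comap (Ideal.Quotient.mk Jd) x.asIdeal).IsPrime := by
    intro x
    haveI := x.isPrime
    exact Ideal.IsPrime.comap _
  have hJle : Jd ≤ Ideal.comap (Ideal.Quotient.mk Jd) (l (idx 0)).asIdeal := by
    intro x hx
    have h0 : Ideal.Quotient.mk Jd x = 0 := Ideal.Quotient.eq_zero_iff_mem.mpr hx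
    show Ideal.Quotient.mk Jd x ∈ (l (idx 0)).asIdeal
    rw [h0]
    exact zero_mem _
  exact no4R4 (hprime _) (hprime _) (hprime _) (hprime _) hJle
    (hcomap (mono 0 1 (by omega) (by omega)))
    (hcomap (mono 1 2 (by omega) (by omega)))
    (hcomap (mono 2 3 (by omega) (by omega)))

theorem mainEq : ringKrullDim (R4 ⧸ Jd) = 2 := by
  have hupper : ringKrullDim (R4 ⧸ Jd) ≤ 2 := by
    show (⨆ (p : LTSeries (PrimeSpectrum (R4 ⧸ Jd))), (p.length : WithBot (WithTop ℕ))) ≤ 2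
    apply iSup_le
    intro p
    have := lengthBound p
    exact_mod_cast this
  have hlower : (2 : WithBot (WithTop ℕ)) ≤ ringKrullDim (R4 ⧸ Jd) :=
    le_trans two_le_S2 (ringKrullDim_le_of_surjective liftPhi liftPhi_surj)
  exact le_antisymm hupper hlower

end Stmt18Aux

open MvPolynomial

theorem stmt18 :
    let y₁ : MvPolynomial (Fin 4) ℂ := X 0
    let y₂ : MvPolynomial (Fin 4) ℂ := X 1
    let ξ₁ : MvPolynomial (Fin 4) ℂ := X 2
    let ξ₂ : MvPolynomial (Fin 4) ℂ := X 3
    let p₁ := y₂ ^ 2 * ξ₁ ^ 3 * ξ₂ ^ 2 + 3 * y₂ ^ 2 * ξ₁ ^ 2 * ξ₂ ^ 3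
      + 3 * y₂ ^ 2 * ξ₁ * ξ₂ ^ 4 + y₂ ^ 2 * ξ₂ ^ 5
    let p₂ := y₁ * y₂ * ξ₁ ^ 3 + 3 * y₁ * y₂ * ξ₁ ^ 2 * ξ₂
      + 3 * y₂ ^ 2 * ξ₁ * ξ₂ ^ 2 + y₂ ^ 2 * ξ₂ ^ 3
    let p₃ := y₁ ^ 2 * ξ₁ ^ 2 - y₁ * y₂ * ξ₁ ^ 2
    let p₄ := y₁ * y₂ * ξ₂ ^ 2 - y₂ ^ 2 * ξ₂ ^ 2
    ringKrullDim (MvPolynomial (Fin 4) ℂ ⧸ Ideal.span {p₁, p₂, p₃, p₄}) = 2 := by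
  intro y₁ y₂ ξ₁ ξ₂ p₁ p₂ p₃ p₄
  have h : Ideal.span {p₁, p₂, p₃, p₄} = Stmt18Aux.Jd := by
    unfold p₁ p₂ p₃ p₄ y₁ y₂ ξ₁ ξ₂
    unfold Stmt18Aux.Jd Stmt18Aux.pp1 Stmt18Aux.pp2 Stmt18Aux.pp3 Stmt18Aux.pp4
    congr 1
  rw [h]
  exact Stmt18Aux.mainEq
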